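/- Let Z, H, X, Y be countable types and suppose a joint probability mass function on Z × H × X × Y factorizes as p(z,h,x,y) = pZ(z) · pX(z,x) · pH(h) · pY(x,z,h,y), where pZ sums to 1 over z, pX(z,·) sums to 1 over x for every z, pH sums to 1 over h, and pY(x,z,h,·) sums to 1 over y for all x,z,h. Fix x ∈ X and y ∈ Y with m(x) := ∑_z pZ(z)·pX(z,x) > 0, and fix h₁, h₂ ∈ H with pH(h₁) > 0, pH(h₂) > 0 and E(h₂) := ∑_z (pZ(z)·pX(z,x)/m(x)) · pY(x,z,h₂,y) > 0. Then the likelihood ratio P(X=x, Y=y | H=h₁) / P(X=x, Y=y | H=h₂) equals E(h₁) / E(h₂), where E(h) := ∑_z (pZ(z)·pX(z,x)/m(x)) · pY(x,z,h,y) = E[ pY(x,Z,h,y) | X = x ]. -/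
import Mathlib


/-- **Corollary 1 (discrete version).**
Suppose the joint pmf on `Z × H × X × Y` factorizes as
`p(z,h,x,y) = pZ z * pX z x * pH h * pY x z h y`.  Fix `x, y` with
`m x := ∑' z, pZ z * pX z x > 0`, and `h₁, h₂` with `pH h₁ > 0`, `pH h₂ > 0` and
`E h₂ > 0`, where `E h := ∑' z, (pZ z * pX z x / m x) * pY x z h y` is the
conditional expectation `E[ pY x Z h y | X = x ]`.  Then the likelihood ratio
`P(X = x, Y = y | H = h₁) / P(X = x, Y = y | H = h₂)` equals `E h₁ / E h₂`. -/
theorem corollary1_discrete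
    {Z H X Y : Type*} [Countable Z] [Countable H] [Countable X] [Countable Y]
    (pZ : Z → ℝ) (pX : Z → X → ℝ) (pH : H → ℝ) (pY : X → Z → H → Y → ℝ)
    (hZ0 : ∀ z, 0 ≤ pZ z) (hZ1 : ∑' z, pZ z = 1)
    (hX0 : ∀ z x, 0 ≤ pX z x) (hX1 : ∀ z, ∑' x, pX z x = 1)
    (hH0 : ∀ h, 0 ≤ pH h) (hH1 : ∑' h, pH h = 1)
    (hY0 : ∀ x z h y, 0 ≤ pY x z h y) (hY1 : ∀ x z h, ∑' y, pY x z h y = 1)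
    (x : X) (y : Y) (hm : 0 < ∑' z, pZ z * pX z x)
    (h₁ h₂ : H) (hh₁ : 0 < pH h₁) (hh₂ : 0 < pH h₂)
    (hE₂ : 0 < ∑' z, (pZ z * pX z x / (∑' z', pZ z' * pX z' x)) * pY x z h₂ y) :
    ((∑' z, pZ z * pX z x * pH h₁ * pY x z h₁ y) / pH h₁) /
        ((∑' z, pZ z * pX z x * pH h₂ * pY x z h₂ y) / pH h₂)
      = (∑' z, (pZ z * pX z x / (∑' z', pZ z' * pX z' x)) * pY x z h₁ y) /
          (∑' z, (pZ z * pX z x / (∑' z', pZ z' * pX z' x)) * pY x z h₂ y) := by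
  set m := ∑' z', pZ z' * pX z' x with hmdef
  have hm0 : m ≠ 0 := ne_of_gt hm
  -- rewrite each tsum
  have key : ∀ h : H, (∑' z, pZ z * pX z x * pH h * pY x z h y)
      = pH h * ∑' z, pZ z * pX z x * pY x z h y := by
    intro h
    rw [← tsum_mul_left]
    exact tsum_congr fun z => by ring
  have key2 : ∀ h : H, (∑' z, (pZ z * pX z x / m) * pY x z h y)
      = m⁻¹ * ∑' z, pZ z * pX z x * pY x z h y := by
    intro h
    rw [← tsum_mul_left]
    exact tsum_congr fun z => by rw [div_eq_mul_inv]; ring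
  have hS₂ : (∑' z, pZ z * pX z x * pY x z h₂ y) ≠ 0 := by
    intro h0
    rw [key2 h₂, h0, mul_zero] at hE₂
    exact lt_irrefl 0 hE₂
  rw [key h₁, key h₂, key2 h₁, key2 h₂]
  field_simp
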